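/- Let φ₁,…,φ_n and W₁,…,W_n be continuous complex-valued functions on [0,d] such that W_n(0) = 1 and for every 0 < d₁ ≤ d the system φ₁,…,φ_n is linearly independent on [0, d₁]. Then the Volterra-type operator R on L²[0,d] defined by (Rg)(x) = Σ_{ν=1}^n φ_ν(x) ∫₀ˣ W_ν(ξ) g(ξ) dξ has infinite-dimensional range. -/

import Mathlib

open MeasureTheory


lemma exists_indep_subinterval
    (n : ℕ) (d : ℝ) (φ : Fin (n + 1) → ℝ → ℂ)
    (hφ : ∀ ν, ContinuousOn (φ ν) (Set.Icc 0 d))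
    (hind : ∀ d₁ : ℝ, 0 < d₁ → d₁ ≤ d →
      ∀ A : Fin (n + 1) → ℂ,
        (∀ x ∈ Set.Icc (0 : ℝ) d₁, ∑ ν, A ν * φ ν x = 0) → ∀ ν, A ν = 0)
    (e : ℝ) (he : 0 < e) (hed : e ≤ d) :
    ∃ a b : ℝ, 0 < a ∧ a < b ∧ b < e ∧
      ∀ A : Fin (n + 1) → ℂ,
        (∀ x ∈ Set.Icc a b, ∑ ν, A ν * φ ν x = 0) → ∀ ν, A ν = 0 := by
  by_contra hcon
  push_neg at hcon
  -- hcon : ∀ a b, 0 < a → a < b → b < e → ∃ A, (∀ x ∈ Icc a b, ∑ = 0) ∧ ∃ ν, A ν ≠ 0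
  set V : ℕ → Submodule ℂ (Fin (n + 1) → ℂ) := fun k =>
    { carrier := {A | ∀ x ∈ Set.Icc (e / (k + 3)) (e / 2), ∑ ν, A ν * φ ν x = 0}
      add_mem' := by
        intro A B hA hB x hx
        simp only [Pi.add_apply, add_mul, Finset.sum_add_distrib, hA x hx, hB x hx, add_zero]
      zero_mem' := by intro x hx; simp
      smul_mem' := by
        intro c A hA x hx
        simp only [Pi.smul_apply, smul_eq_mul, mul_assoc, ← Finset.mul_sum, hA x hx, mul_zero] }
    with hV
  have hmemV : ∀ k (A : Fin (n+1) → ℂ),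
      A ∈ V k ↔ ∀ x ∈ Set.Icc (e / (k + 3)) (e / 2), ∑ ν, A ν * φ ν x = 0 := by
    intro k A; rfl
  have hpos : ∀ k : ℕ, (0:ℝ) < e / (k + 3) := by
    intro k
    apply div_pos he
    positivity
  have hlt : ∀ k : ℕ, e / (k + 3) < e / 2 := by
    intro k
    apply div_lt_div_of_pos_left he (by norm_num) (by push_cast; linarith)
  have hVne : ∀ k, V k ≠ ⊥ := by
    intro k
    obtain ⟨A, hA, ν, hν⟩ := hcon (e / (k + 3)) (e / 2) (hpos k) (hlt k)
      (by linarith [half_lt_self he])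
    rw [Submodule.ne_bot_iff]
    refine ⟨A, (hmemV k A).2 hA, ?_⟩
    intro h0; exact hν (by simp [h0])
  have hVanti : ∀ k k' : ℕ, k ≤ k' → V k' ≤ V k := by
    intro k k' hkk A hA
    rw [hmemV] at hA ⊢
    intro x hx
    refine hA x ⟨le_trans ?_ hx.1, hx.2⟩
    apply div_le_div_of_nonneg_left he.le (by positivity)
    push_cast; linarith [(Nat.cast_le (α := ℝ)).2 hkk]
  -- descending chain stabilizes
  set r := sInf (Set.range fun k => Module.finrank ℂ (V k)) with hr
  obtain ⟨K, hK⟩ : ∃ K, Module.finrank ℂ (V K) = r := by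
    have : r ∈ Set.range fun k => Module.finrank ℂ (V k) := Nat.sInf_mem ⟨_, ⟨0, rfl⟩⟩
    exact this
  have hVK : ∀ k, V K ≤ V k := by
    intro k
    have h1 : V (max k K) ≤ V K := hVanti _ _ (le_max_right _ _)
    have h2 : V (max k K) ≤ V k := hVanti _ _ (le_max_left _ _)
    have h3 : V (max k K) = V K := by
      apply Submodule.eq_of_le_of_finrank_le h1
      rw [hK]
      exact Nat.sInf_le ⟨_, rfl⟩
    rw [← h3]; exact h2
  obtain ⟨A, hA, hA0⟩ := (Submodule.ne_bot_iff _).1 (hVne K)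
  have hIoc : ∀ x ∈ Set.Ioc (0:ℝ) (e / 2), ∑ ν, A ν * φ ν x = 0 := by
    intro x hx
    obtain ⟨k, hk⟩ := exists_nat_ge (e / x)
    refine (hmemV k A).1 (hVK k hA) x ⟨?_, hx.2⟩
    rw [div_le_iff₀ (by positivity)]
    rw [div_le_iff₀ hx.1] at hk
    nlinarith [hx.1]
  have hcont : ContinuousOn (fun x => ∑ ν, A ν * φ ν x) (Set.Icc 0 d) := by
    apply continuousOn_finset_sum
    intro ν _
    exact continuousOn_const.mul (hφ ν)
  have h0 : ∑ ν, A ν * φ ν 0 = 0 := by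
    have hsub : Set.Ioc (0:ℝ) (e / 2) ⊆ Set.Icc 0 d := fun x hx =>
      ⟨hx.1.le, hx.2.trans (by linarith [half_le_self he.le])⟩
    have hne : (nhdsWithin (0:ℝ) (Set.Ioc 0 (e / 2))).NeBot := by
      rw [← mem_closure_iff_nhdsWithin_neBot, closure_Ioc (by positivity : (0:ℝ) ≠ e/2)]
      exact ⟨le_refl 0, by positivity⟩
    have t1 : Filter.Tendsto (fun x => ∑ ν, A ν * φ ν x)
        (nhdsWithin (0:ℝ) (Set.Ioc 0 (e / 2))) (nhds (∑ ν, A ν * φ ν 0)) :=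
      (hcont 0 ⟨le_refl 0, by linarith⟩).mono_left (nhdsWithin_mono 0 hsub)
    have t2 : Filter.Tendsto (fun x => ∑ ν, A ν * φ ν x)
        (nhdsWithin (0:ℝ) (Set.Ioc 0 (e / 2))) (nhds 0) :=
      tendsto_const_nhds.congr'
        (eventually_mem_nhdsWithin.mono fun x hx => (hIoc x hx).symm)
    exact tendsto_nhds_unique t1 t2
  have hall : ∀ x ∈ Set.Icc (0:ℝ) (e / 2), ∑ ν, A ν * φ ν x = 0 := by
    intro x hx
    rcases eq_or_lt_of_le hx.1 with h | h
    · rw [← h]; exact h0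
    · exact hIoc x ⟨h, hx.2⟩
  have := hind (e / 2) (by positivity) (by linarith [half_le_self he.le]) A hall
  exact hA0 (funext this)


lemma lp_coeFn_finset_sum {α : Type*} [MeasurableSpace α] {μ : Measure α} {ι : Type*}
    (s : Finset ι) (h : ι → Lp ℂ 2 μ) :
    (↑(∑ i ∈ s, h i) : α → ℂ) =ᵐ[μ] fun x => ∑ i ∈ s, (h i : α → ℂ) x := by
  classical
  induction s using Finset.induction with
  | empty => simp only [Finset.sum_empty]; exact Lp.coeFn_zero ℂ 2 μ
  | @insert a s hi ih =>
    rw [Finset.sum_insert hi]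
    filter_upwards [Lp.coeFn_add (h a) (∑ i ∈ s, h i), ih] with x h1 h2
    rw [h1, Pi.add_apply, h2, Finset.sum_insert hi]

/-- Let `φ_ν, W_ν` (`ν = 1, …, n+1`) be continuous on `[0, d]`
with `W_{n+1}(0) = 1` and `φ_1, …, φ_{n+1}` linearly independent on `[0, d₁]` for
every `0 < d₁ ≤ d`. Then the Volterra-type operator
`(R g)(x) = Σ_ν φ_ν(x) ∫₀ˣ W_ν(ξ) g(ξ) dξ` on `L²[0, d]` has
infinite-dimensional range. -/
theorem volterra_operator_infinite_rank
    (n : ℕ) (d : ℝ) (hd : 0 < d)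
    (φ W : Fin (n + 1) → ℝ → ℂ)
    (hφ : ∀ ν, ContinuousOn (φ ν) (Set.Icc 0 d))
    (hW : ∀ ν, ContinuousOn (W ν) (Set.Icc 0 d))
    (hWn : W (Fin.last n) 0 = 1)
    (hind : ∀ d₁ : ℝ, 0 < d₁ → d₁ ≤ d →
      ∀ A : Fin (n + 1) → ℂ,
        (∀ x ∈ Set.Icc (0 : ℝ) d₁, ∑ ν, A ν * φ ν x = 0) → ∀ ν, A ν = 0)
    (R : Lp ℂ 2 (volume.restrict (Set.Icc (0 : ℝ) d)) →L[ℂ]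
      Lp ℂ 2 (volume.restrict (Set.Icc (0 : ℝ) d)))
    (hR : ∀ g, (R g : ℝ → ℂ) =ᵐ[volume.restrict (Set.Icc (0 : ℝ) d)]
      fun x => ∑ ν, φ ν x * ∫ ξ in (0 : ℝ)..x, W ν ξ * g ξ) :
    ¬ ∃ F : Submodule ℂ (Lp ℂ 2 (volume.restrict (Set.Icc (0 : ℝ) d))),
        FiniteDimensional ℂ F ∧
          LinearMap.range (R : Lp ℂ 2 (volume.restrict (Set.Icc (0 : ℝ) d)) →ₗ[ℂ]
            Lp ℂ 2 (volume.restrict (Set.Icc (0 : ℝ) d))) ≤ F := by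
  rintro ⟨F, hF, hle⟩
  haveI : FiniteDimensional ℂ F := hF
  -- Step 1: find δ2 > 0 with Re (W_last) > 1/2 on [0, δ2]
  obtain ⟨δ2, hδ2pos, hδ2d, hδ2W⟩ : ∃ δ2 : ℝ, 0 < δ2 ∧ δ2 ≤ d ∧
      ∀ x ∈ Set.Icc (0:ℝ) δ2, (1:ℝ)/2 < (W (Fin.last n) x).re := by
    have hc : ContinuousWithinAt (W (Fin.last n)) (Set.Icc 0 d) 0 :=
      (hW (Fin.last n)) 0 ⟨le_refl 0, hd.le⟩
    rw [Metric.continuousWithinAt_iff] at hc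
    obtain ⟨δ, hδpos, hδ⟩ := hc (1/2) (by norm_num)
    refine ⟨min d (δ/2), by positivity, min_le_left _ _, ?_⟩
    intro x hx
    have hx1 : x ∈ Set.Icc (0:ℝ) d := ⟨hx.1, hx.2.trans (min_le_left _ _)⟩
    have hx2 : dist x 0 < δ := by
      rw [Real.dist_eq, sub_zero, abs_of_nonneg hx.1]
      have h1 : x ≤ δ/2 := hx.2.trans (min_le_right _ _)
      linarith
    have h3 := hδ hx1 hx2
    rw [dist_eq_norm, hWn] at h3
    have h4 : |(W (Fin.last n) x - 1).re| ≤ ‖W (Fin.last n) x - 1‖ :=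
      Complex.abs_re_le_norm _
    rw [abs_le'] at h4
    have h5 : (W (Fin.last n) x - 1).re = (W (Fin.last n) x).re - 1 := by
      simp [Complex.sub_re]
    nlinarith [h4.2, abs_nonneg ((W (Fin.last n) x - 1).re)]
  -- Step 2: recursively choose intervals of independence
  have step : ∀ e : {x : ℝ // 0 < x ∧ x ≤ δ2}, ∃ p : ℝ × ℝ,
      0 < p.1 ∧ p.1 < p.2 ∧ p.2 < e.1 ∧
      ∀ A : Fin (n + 1) → ℂ,
        (∀ x ∈ Set.Icc p.1 p.2, ∑ ν, A ν * φ ν x = 0) → ∀ ν, A ν = 0 := by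
    rintro ⟨e, he, heδ⟩
    obtain ⟨a, b, h1, h2, h3, h4⟩ :=
      exists_indep_subinterval n d φ hφ hind e he (heδ.trans hδ2d)
    exact ⟨(a, b), h1, h2, h3, h4⟩
  choose P hP1 hP2 hP3 hP4 using step
  let E : ℕ → {x : ℝ // 0 < x ∧ x ≤ δ2} := fun k =>
    Nat.rec ⟨δ2, hδ2pos, le_refl δ2⟩
      (fun _ prev => ⟨(P prev).1, hP1 prev,
        (le_of_lt ((hP2 prev).trans (hP3 prev))).trans prev.2.2⟩) k
  set a : ℕ → ℝ := fun l => (P (E l)).1 with ha_def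
  set b : ℕ → ℝ := fun l => (P (E l)).2 with hb_def
  have hEsucc : ∀ l, (E (l+1)).1 = a l := fun l => rfl
  have ha : ∀ l, 0 < a l := fun l => hP1 (E l)
  have hab : ∀ l, a l < b l := fun l => hP2 (E l)
  have hbE : ∀ l, b l < (E l).1 := fun l => hP3 (E l)
  have hindJ : ∀ l, ∀ A : Fin (n + 1) → ℂ,
      (∀ x ∈ Set.Icc (a l) (b l), ∑ ν, A ν * φ ν x = 0) → ∀ ν, A ν = 0 :=
    fun l => hP4 (E l)
  have hbδ : ∀ l, b l ≤ δ2 := fun l => (lt_of_lt_of_le (hbE l) (E l).2.2).le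
  have hba : ∀ l, b (l+1) < a l := fun l => by rw [← hEsucc l]; exact hbE (l+1)
  have hbanti : StrictAnti b := strictAnti_nat_of_succ_lt fun l => (hba l).trans (hab l)
  have hS_sub : ∀ l, Set.Ioo (b (l+1)) (a l) ⊆ Set.Icc 0 δ2 := by
    intro l ξ hξ
    constructor
    · exact (((ha (l+1)).trans (hab (l+1))).trans hξ.1).le
    · exact (hξ.2.trans ((hab l).trans_le (hbδ l))).le
  have hS_sub' : ∀ l, Set.Ioo (b (l+1)) (a l) ⊆ Set.Icc 0 d := fun l =>
    (hS_sub l).trans (Set.Icc_subset_Icc le_rfl hδ2d)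
  -- Step 3: the test functions
  have hSfin : ∀ l : ℕ,
      volume.restrict (Set.Icc (0:ℝ) d) (Set.Ioo (b (l+1)) (a l)) ≠ ⊤ := by
    intro l
    rw [Measure.restrict_apply measurableSet_Ioo]
    exact ((measure_mono Set.inter_subset_left).trans_lt measure_Ioo_lt_top).ne
  let g : ℕ → Lp ℂ 2 (volume.restrict (Set.Icc (0:ℝ) d)) := fun l =>
    indicatorConstLp 2 measurableSet_Ioo (hSfin l) (1 : ℂ)
  let f : ℕ → Lp ℂ 2 (volume.restrict (Set.Icc (0:ℝ) d)) := fun l => R (g l)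
  set A : Fin (n+1) → ℕ → ℂ := fun ν l => ∫ ξ in Set.Ioo (b (l+1)) (a l), W ν ξ with hA_def
  have hWint : ∀ (ν) (l : ℕ), IntegrableOn (W ν) (Set.Ioo (b (l+1)) (a l)) := by
    intro ν l
    exact ((hW ν).integrableOn_Icc).mono_set (hS_sub' l)
  have hAlast : ∀ l : ℕ, A (Fin.last n) l ≠ 0 := by
    intro l
    have h1 : ∫ ξ in Set.Ioo (b (l+1)) (a l), (W (Fin.last n) ξ).re
        = (A (Fin.last n) l).re := by
      simpa using integral_re (hWint (Fin.last n) l)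
    have h2 : (a l - b (l+1))/2 ≤ ∫ ξ in Set.Ioo (b (l+1)) (a l), (W (Fin.last n) ξ).re := by
      have h3 : ∫ ξ in Set.Ioo (b (l+1)) (a l), (1:ℝ)/2
          ≤ ∫ ξ in Set.Ioo (b (l+1)) (a l), (W (Fin.last n) ξ).re := by
        apply setIntegral_mono_on (integrableOn_const measure_Ioo_lt_top.ne)
          ((hWint (Fin.last n) l).re) measurableSet_Ioo
        intro x hx
        exact (hδ2W x (hS_sub l hx)).le
      rw [setIntegral_const, Real.volume_real_Ioo_of_le (by linarith [hba l]), smul_eq_mul] at h3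
      linarith
    intro h0
    rw [h0] at h1
    simp only [Complex.zero_re] at h1
    rw [h1] at h2
    linarith [hba l]
  -- Step 4: linear independence of the images
  classical
  set m := Module.finrank ℂ F with hm
  have hli : LinearIndependent ℂ (fun l : Fin (m+1) => f l.val) := by
    rw [Fintype.linearIndependent_iff]
    intro c hc
    by_contra hcne
    push_neg at hcne
    obtain ⟨L0, hL0⟩ := hcne
    set T : Finset (Fin (m+1)) := Finset.univ.filter (fun l => c l ≠ 0) with hT
    have hTne : T.Nonempty := ⟨L0, by simp [hT, hL0]⟩
    set L := T.max' hTne with hLdef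
    have hcL : c L ≠ 0 := by
      have := T.max'_mem hTne
      simpa [hT] using this
    have hmax : ∀ l, c l ≠ 0 → l ≤ L := fun l hl => T.le_max' l (by simp [hT, hl])
    -- a.e. facts
    have hc0 : (↑(∑ l : Fin (m+1), c l • f l.val) : ℝ → ℂ)
        =ᵐ[volume.restrict (Set.Icc (0:ℝ) d)] 0 := by
      rw [hc]; exact Lp.coeFn_zero ℂ 2 _
    have hsum := lp_coeFn_finset_sum (Finset.univ) (fun l : Fin (m+1) => c l • f l.val)
    have hsmul : ∀ᵐ x ∂(volume.restrict (Set.Icc (0:ℝ) d)),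
        ∀ l : Fin (m+1), (↑(c l • f l.val) : ℝ → ℂ) x = c l • (↑(f l.val) : ℝ → ℂ) x :=
      ae_all_iff.2 fun l => Lp.coeFn_smul (c l) (f l.val)
    have hRae : ∀ᵐ x ∂(volume.restrict (Set.Icc (0:ℝ) d)), ∀ l : Fin (m+1),
        (↑(f l.val) : ℝ → ℂ) x
          = ∑ ν, φ ν x * ∫ ξ in (0:ℝ)..x, W ν ξ * (↑(g l.val) : ℝ → ℂ) ξ :=
      ae_all_iff.2 fun l => hR (g l.val)
    have hgξ : ∀ l : Fin (m+1), ∀ᵐ ξ ∂volume, ξ ∈ Set.Icc (0:ℝ) d →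
        (↑(g l.val) : ℝ → ℂ) ξ
          = Set.indicator (Set.Ioo (b (l.val+1)) (a l.val)) (fun _ => 1) ξ :=
      fun l => (ae_restrict_iff' measurableSet_Icc).1 indicatorConstLp_coeFn
    have hIeq : ∀ l : Fin (m+1), ∀ x ∈ Set.Icc (0:ℝ) d, ∀ ν : Fin (n+1),
        (∫ ξ in (0:ℝ)..x, W ν ξ * (↑(g l.val) : ℝ → ℂ) ξ)
        = ∫ ξ in (0:ℝ)..x, W ν ξ *
            Set.indicator (Set.Ioo (b (l.val+1)) (a l.val)) (fun _ => 1) ξ := by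
      intro l x hx ν
      apply intervalIntegral.integral_congr_ae
      filter_upwards [hgξ l] with ξ h1 h2
      rw [Set.uIoc_of_le hx.1] at h2
      rw [h1 ⟨h2.1.le, h2.2.trans hx.2⟩]
    have hJsub : Set.Icc (a L.val) (b L.val) ⊆ Set.Icc (0:ℝ) d :=
      Set.Icc_subset_Icc (ha L.val).le ((hbδ L.val).trans hδ2d)
    have haeJ : (fun x => ∑ ν, (c L * A ν L.val) * φ ν x)
        =ᵐ[volume.restrict (Set.Icc (a L.val) (b L.val))] 0 := by
      have h1' := ae_restrict_of_ae_restrict_of_subset hJsub hc0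
      have h2' := ae_restrict_of_ae_restrict_of_subset hJsub hsum
      have h3' := ae_restrict_of_ae_restrict_of_subset hJsub hsmul
      have h4' := ae_restrict_of_ae_restrict_of_subset hJsub hRae
      filter_upwards [h1', h2', h3', h4', ae_restrict_mem measurableSet_Icc]
        with x h1 h2 h3 h4 hxJ
      have hx : x ∈ Set.Icc (0:ℝ) d := hJsub hxJ
      have hx0 : (0:ℝ) ≤ x := hx.1
      have e2 : ∀ l : Fin (m+1), (↑(f l.val) : ℝ → ℂ) x
          = ∑ ν, φ ν x * ∫ ξ in (0:ℝ)..x, W ν ξ *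
              Set.indicator (Set.Ioo (b (l.val+1)) (a l.val)) (fun _ => 1) ξ :=
        fun l => (h4 l).trans (Finset.sum_congr rfl fun ν _ => by rw [hIeq l x hx ν])
      have key : ∑ l : Fin (m+1), c l * (∑ ν, φ ν x *
          ∫ ξ in (0:ℝ)..x, W ν ξ *
            Set.indicator (Set.Ioo (b (l.val+1)) (a l.val)) (fun _ => 1) ξ) = 0 := by
        calc ∑ l : Fin (m+1), c l * (∑ ν, φ ν x *
            ∫ ξ in (0:ℝ)..x, W ν ξ *
              Set.indicator (Set.Ioo (b (l.val+1)) (a l.val)) (fun _ => 1) ξ)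
            = ∑ l : Fin (m+1), (↑(c l • f l.val) : ℝ → ℂ) x := by
              refine Finset.sum_congr rfl fun l _ => ?_
              rw [h3 l, smul_eq_mul, e2 l]
          _ = (↑(∑ l : Fin (m+1), c l • f l.val) : ℝ → ℂ) x := h2.symm
          _ = 0 := by rw [h1]; rfl
      -- terms with l ≠ L vanish
      have hterm : ∀ l ∈ (Finset.univ : Finset (Fin (m+1))), l ≠ L →
          c l * (∑ ν, φ ν x *
            ∫ ξ in (0:ℝ)..x, W ν ξ *
              Set.indicator (Set.Ioo (b (l.val+1)) (a l.val)) (fun _ => 1) ξ) = 0 := by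
        intro l _ hne
        rcases lt_or_gt_of_ne hne with hlt | hgt
        · -- l < L : the integrals vanish since x ≤ b L ≤ b (l+1)
          have hxb : x ≤ b (l.val + 1) := by
            refine le_trans hxJ.2 ?_
            exact hbanti.antitone (Nat.succ_le_of_lt hlt)
          have hint0 : ∀ ν : Fin (n+1), (∫ ξ in (0:ℝ)..x, W ν ξ *
              Set.indicator (Set.Ioo (b (l.val+1)) (a l.val)) (fun _ => (1:ℂ)) ξ) = 0 := by
            intro ν
            have heq : Set.EqOn (fun ξ => W ν ξ *
                Set.indicator (Set.Ioo (b (l.val+1)) (a l.val)) (fun _ => (1:ℂ)) ξ)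
                (fun _ => 0) (Set.uIcc 0 x) := by
              intro ξ hξ
              rw [Set.uIcc_of_le hx0] at hξ
              have hnot : ξ ∉ Set.Ioo (b (l.val+1)) (a l.val) := by
                intro hmem
                have := hmem.1
                have := hξ.2
                linarith
              simp [Set.indicator_of_notMem hnot]
            rw [intervalIntegral.integral_congr heq]
            simp
          simp only [hint0, mul_zero, Finset.sum_const_zero]
        · -- L < l : c l = 0
          have : c l = 0 := by
            by_contra hcl
            exact absurd (hmax l hcl) (not_le.2 hgt)
          rw [this, zero_mul]
      -- the L-term
      have hintL : ∀ ν : Fin (n+1), (∫ ξ in (0:ℝ)..x, W ν ξ *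
          Set.indicator (Set.Ioo (b (L.val+1)) (a L.val)) (fun _ => (1:ℂ)) ξ)
          = A ν L.val := by
        intro ν
        rw [intervalIntegral.integral_of_le hx0]
        have hrw : ∀ ξ : ℝ, W ν ξ *
            Set.indicator (Set.Ioo (b (L.val+1)) (a L.val)) (fun _ => (1:ℂ)) ξ
            = Set.indicator (Set.Ioo (b (L.val+1)) (a L.val)) (W ν) ξ := by
          intro ξ
          by_cases hmem : ξ ∈ Set.Ioo (b (L.val+1)) (a L.val)
          · simp [hmem]
          · simp [hmem]
        simp_rw [hrw]
        rw [setIntegral_indicator measurableSet_Ioo]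
        have hinter : Set.Ioc 0 x ∩ Set.Ioo (b (L.val+1)) (a L.val)
            = Set.Ioo (b (L.val+1)) (a L.val) := by
          refine Set.inter_eq_right.2 fun ξ hξ => ?_
          constructor
          · exact ((ha (L.val+1)).trans (hab (L.val+1))).trans hξ.1
          · exact hξ.2.le.trans hxJ.1
        rw [hinter]
      have keyL : c L * ∑ ν, φ ν x * A ν L.val = 0 := by
        rw [Finset.sum_eq_single L hterm
          (fun h => absurd (Finset.mem_univ L) h)] at key
        rw [← key]
        congr 1
        exact Finset.sum_congr rfl fun ν _ => by rw [hintL ν]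
      show ∑ ν, (c L * A ν L.val) * φ ν x = 0
      calc ∑ ν, (c L * A ν L.val) * φ ν x
          = c L * ∑ ν, φ ν x * A ν L.val := by
            rw [Finset.mul_sum]
            exact Finset.sum_congr rfl fun ν _ => by ring
        _ = 0 := keyL
    -- conclude from independence on the interval J_L
    have hcont2 : ContinuousOn (fun x => ∑ ν, (c L * A ν L.val) * φ ν x)
        (Set.Icc (a L.val) (b L.val)) := by
      apply continuousOn_finset_sum
      intro ν _
      exact continuousOn_const.mul ((hφ ν).mono hJsub)
    have hEqOn : Set.EqOn (fun x => ∑ ν, (c L * A ν L.val) * φ ν x) 0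
        (Set.Icc (a L.val) (b L.val)) :=
      Measure.eqOn_Icc_of_ae_eq (μ := volume) (hab L.val).ne haeJ hcont2 continuousOn_const
    have hcoef := hindJ L.val (fun ν => c L * A ν L.val)
      (fun x hx => hEqOn hx)
    rcases mul_eq_zero.1 (hcoef (Fin.last n)) with h | h
    · exact hcL h
    · exact hAlast L.val h
  -- Step 5: contradiction with finite dimension
  have hliF : LinearIndependent ℂ (fun l : Fin (m+1) =>
      (⟨f l.val, hle ⟨g l.val, rfl⟩⟩ : F)) :=
    LinearIndependent.of_comp F.subtype hli
  have hcard := hliF.fintype_card_le_finrank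
  simp only [Fintype.card_fin] at hcard
  omega
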